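/- For every λ ∈ (0, π/2), one has λ² < 3·𝒜₁(λ), i.e. λ² < (3/2)·(1/cos²(λ) − sin(λ)/(λ·cos(λ))); equivalently, the exact exponential growth rate λ of the pressure is strictly smaller than the asymptotic prediction √(3·𝒜₁). -/

import Mathlib

open Real Set

private lemma aux_deriv (x : ℝ) :
    HasDerivAt (fun x : ℝ => 3*x - 3*Real.sin x*Real.cos x - 2*x^3*(Real.cos x)^2)
      (6*(Real.sin x)^2 - 6*x^2*(Real.cos x)^2 + 4*x^3*Real.sin x*Real.cos x) x := by
  have h1 : HasDerivAt (fun x : ℝ => 3*x) 3 x := by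
    simpa using (hasDerivAt_id x).const_mul (3:ℝ)
  have h2 : HasDerivAt (fun x : ℝ => 3*Real.sin x*Real.cos x)
      (3*(Real.cos x*Real.cos x + Real.sin x*(-Real.sin x))) x := by
    simpa [mul_assoc] using ((Real.hasDerivAt_sin x).mul (Real.hasDerivAt_cos x)).const_mul (3:ℝ)
  have h3 : HasDerivAt (fun x : ℝ => 2*x^3*(Real.cos x)^2)
      (2*((3*x^2)*(Real.cos x)^2 + x^3*(2*Real.cos x*(-Real.sin x)))) x := by
    have := (hasDerivAt_pow 3 x).mul ((Real.hasDerivAt_cos x).pow 2)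
    simpa [mul_assoc, mul_comm, mul_left_comm] using this.const_mul (2:ℝ)
  have := (h1.sub h2).sub h3
  refine this.congr_deriv ?_
  have hs := Real.sin_sq_add_cos_sq x
  linear_combination (-3) * hs

theorem stmt_19 (l : ℝ) (hl : l ∈ Ioo 0 (π / 2)) :
    l ^ 2 < (3/2) * (1 / (Real.cos l) ^ 2 - Real.sin l / (l * Real.cos l)) := by
  obtain ⟨hl0, hl2⟩ := hl
  have hc : 0 < Real.cos l := Real.cos_pos_of_mem_Ioo ⟨by linarith [Real.pi_pos], hl2⟩
  set f : ℝ → ℝ := fun x => 3*x - 3*Real.sin x*Real.cos x - 2*x^3*(Real.cos x)^2 with hf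
  have hmono : StrictMonoOn f (Icc 0 (π/2)) := by
    apply strictMonoOn_of_deriv_pos (convex_Icc _ _)
    · exact Continuous.continuousOn (by continuity)
    · intro x hx
      rw [interior_Icc] at hx
      rw [(aux_deriv x).deriv]
      have hcx : 0 < Real.cos x := Real.cos_pos_of_mem_Ioo ⟨by linarith [Real.pi_pos, hx.1], hx.2⟩
      have hsx : 0 < Real.sin x := Real.sin_pos_of_pos_of_lt_pi hx.1 (by linarith [Real.pi_pos, hx.2])
      have htan : x < Real.tan x := Real.lt_tan hx.1 hx.2
      rw [Real.tan_eq_sin_div_cos, lt_div_iff₀ hcx] at htan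
      have hp1 : 0 < (Real.sin x - x*Real.cos x)*(Real.sin x + x*Real.cos x) :=
        mul_pos (by linarith) (add_pos hsx (mul_pos hx.1 hcx))
      have hp2 : 0 < x^3*Real.sin x*Real.cos x := mul_pos (mul_pos (pow_pos hx.1 3) hsx) hcx
      nlinarith [hp1, hp2]
  have hfl : 0 < f l := by
    have h0 : f 0 = 0 := by simp [hf]
    have := hmono (by constructor <;> [norm_num; positivity]) ⟨le_of_lt hl0, le_of_lt hl2⟩ hl0
    rw [h0] at this; exact this
  have key : 2*l^3*(Real.cos l)^2 < 3*l - 3*Real.sin l*Real.cos l := by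
    simp only [hf] at hfl; linarith
  have h1 : 1/(Real.cos l)^2 - Real.sin l/(l*Real.cos l)
      = (l - Real.sin l * Real.cos l)/(l * (Real.cos l)^2) := by
    field_simp
  rw [h1, show (3:ℝ)/2 * ((l - Real.sin l*Real.cos l)/(l*(Real.cos l)^2))
      = (3*(l - Real.sin l*Real.cos l))/(2*(l*(Real.cos l)^2)) by ring,
    lt_div_iff₀ (by positivity)]
  nlinarith [key]
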